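/- Let (λ_m)_{m≥1} be a nonincreasing summable sequence of nonnegative reals with ∑_{m=1}^∞ λ_m = 1, let d ≥ 1, and let μ^{(d)} be its product-coarse-graining at scale d. Then the series ∑_{m=1}^∞ |μ^{(d)}_m − λ_m| converges and ∑_{m=1}^∞ |μ^{(d)}_m − λ_m| ≤ 4·∑_{l=d+1}^∞ λ_l. -/

import Mathlib

/-- Product-coarse-graining at scale `d` of a sequence `lam` (0-indexed: position `n`
corresponds to the 1-indexed position `m = n + 1`, so `n = i·d + (k-1)` with
`i = n / d`, `k - 1 = n % d`).  It is the product of the column marginal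
`c^{(d)}_k = ∑_{j=0}^∞ λ_{j·d+k}` and the row marginal `r^{(d)}_i = ∑_{l=1}^d λ_{i·d+l}`. -/
noncomputable def productCoarseGraining (lam : ℕ → ℝ) (d : ℕ) (n : ℕ) : ℝ :=
  (∑' j : ℕ, lam (j * d + n % d)) * (∑ l ∈ Finset.range d, lam (n / d * d + l))

theorem stmt0 (lam : ℕ → ℝ) (hanti : Antitone lam) (hnn : ∀ n, 0 ≤ lam n)
    (hsum : Summable lam) (h1 : ∑' n, lam n = 1) (d : ℕ) (hd : 1 ≤ d) :
    Summable (fun n => |productCoarseGraining lam d n - lam n|) ∧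
      ∑' n, |productCoarseGraining lam d n - lam n| ≤ 4 * ∑' l : ℕ, lam (d + l) := by
  haveI : NeZero d := ⟨by omega⟩
  set T : ℝ := ∑' l : ℕ, lam (d + l) with hT
  set c : ℕ → ℝ := fun k => ∑' j : ℕ, lam (j * d + k) with hc
  set r : ℕ → ℝ := fun i => ∑ l ∈ Finset.range d, lam (i * d + l) with hr
  have hmu : ∀ n, productCoarseGraining lam d n = c (n % d) * r (n / d) := fun n => rfl
  have hTnn : 0 ≤ T := tsum_nonneg fun l => hnn _
  have hr0T : r 0 + T = 1 := by
    have := Summable.sum_add_tsum_nat_add d hsum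
    rw [h1] at this
    simp only [hr, zero_mul, zero_add]
    rw [hT]
    convert this using 2
    · exact (tsum_congr fun l => by rw [add_comm]).symm
  have hrnn : ∀ i, 0 ≤ r i := fun i => Finset.sum_nonneg fun l _ => hnn _
  have hcS : ∀ k, Summable (fun j => lam (j * d + k)) := by
    intro k
    apply hsum.comp_injective
    intro a b hab
    simp only at hab
    have := Nat.add_right_cancel hab
    exact Nat.eq_of_mul_eq_mul_right (by omega) this
  have hcnn : ∀ k, 0 ≤ c k := fun k => tsum_nonneg fun j => hnn _
  have hlamc : ∀ n, lam n ≤ c (n % d) := by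
    intro n
    have := Summable.le_tsum (hcS (n % d)) (n / d) (fun j _ => hnn _)
    rwa [Nat.div_add_mod'] at this
  -- HasSum lam 1 over the product decomposition
  have hprod : HasSum (fun p : ℕ × Fin d => lam (p.1 * d + p.2)) 1 := by
    have := (Nat.divModEquiv d).symm.hasSum_iff.mpr (h1 ▸ hsum.hasSum)
    exact this
  have hrHS : HasSum r 1 := by
    apply hprod.prod_fiberwise
    intro i
    have : HasSum (fun k : Fin d => lam (i * d + k)) (∑ k : Fin d, lam (i * d + k)) :=
      hasSum_fintype _
    rwa [Fin.sum_univ_eq_sum_range (fun l => lam (i * d + l)) d] at this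
  have hcsum : ∑ k ∈ Finset.range d, c k = 1 := by
    have hcomm : HasSum (fun p : Fin d × ℕ => lam (p.2 * d + p.1)) 1 :=
      (Equiv.prodComm (Fin d) ℕ).hasSum_iff.mpr hprod
    have hfib : HasSum (fun k : Fin d => c (k : ℕ)) 1 := by
      apply hcomm.prod_fiberwise
      intro k
      exact (hcS k).hasSum
    have := hfib.tsum_eq
    rw [tsum_fintype, Fin.sum_univ_eq_sum_range (fun k => c k) d] at this
    exact this
  have hTr : T = 1 - r 0 := by linarith
  -- the auxiliary sequences
  set s : ℕ → ℝ := fun i => if i = 0 then 1 - r 0 else r i with hs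
  have hsnn : ∀ i, 0 ≤ s i := by
    intro i
    simp only [hs]
    split
    · linarith
    · exact hrnn i
  have hsHS : HasSum s (2 * T) := by
    have h2 : HasSum (fun i : ℕ => if i = 0 then 1 - 2 * r 0 else 0) (1 - 2 * r 0) :=
      hasSum_ite_eq 0 _
    have h3 := hrHS.add h2
    have : (fun i => r i + if i = 0 then 1 - 2 * r 0 else 0) = s := by
      funext i
      simp only [hs]
      split <;> rename_i h
      · subst h; ring
      · ring
    rw [this] at h3
    convert h3 using 1
    linarith
  -- first piece: A n = c (n%d) * s (n/d)
  have hAprod : Summable (fun p : ℕ × Fin d => c p.2 * s p.1) := by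
    rw [summable_prod_of_nonneg (fun p => mul_nonneg (hcnn _) (hsnn _))]
    constructor
    · intro i; exact Summable.of_finite (f := fun k : Fin d => c k * s i) |>.congr fun k => rfl
    · apply Summable.congr ((hsHS.summable).mul_left 1)
      intro i
      rw [tsum_fintype]
      show 1 * s i = ∑ b : Fin d, c (b : ℕ) * s i
      rw [← Finset.sum_mul, Fin.sum_univ_eq_sum_range (fun k => c k) d, hcsum]
  have hAHS : HasSum (fun p : ℕ × Fin d => c p.2 * s p.1) (2 * T) := by
    have ht := hAprod.hasSum
    have : (∑' p : ℕ × Fin d, c p.2 * s p.1) = 2 * T := by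
      rw [Summable.tsum_prod' hAprod (fun i => Summable.of_finite)]
      have : ∀ i : ℕ, (∑' k : Fin d, c (k : ℕ) * s i) = s i := by
        intro i
        rw [tsum_fintype, ← Finset.sum_mul, Fin.sum_univ_eq_sum_range (fun k => c k) d, hcsum,
          one_mul]
      rw [tsum_congr this, hsHS.tsum_eq]
    rwa [this] at ht
  have hA : HasSum (fun n : ℕ => c (n % d) * s (n / d)) (2 * T) := by
    have := (Nat.divModEquiv d).hasSum_iff.mpr hAHS
    exact this.congr_fun fun n => rfl
  -- second piece: t
  set t : ℕ → ℝ := fun n => if n < d then c n - lam n else lam n with hts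
  have htHS : HasSum t (2 * T) := by
    have h2 : HasSum (fun n : ℕ => if n < d then c n - 2 * lam n else 0)
        (∑ n ∈ Finset.range d, (c n - 2 * lam n)) := by
      have h2' : HasSum (fun n : ℕ => if n < d then c n - 2 * lam n else 0)
          (∑ n ∈ Finset.range d, (if n < d then c n - 2 * lam n else 0)) := by
        apply hasSum_sum_of_ne_finset_zero
        intro n hn
        simp only [Finset.mem_range] at hn
        simp [if_neg (by omega : ¬ n < d)]
      rwa [Finset.sum_congr rfl
        (fun n hn => if_pos (Finset.mem_range.mp hn))] at h2'
    have h3 := h2.add (h1 ▸ hsum.hasSum)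
    have heq : (fun n => (if n < d then c n - 2 * lam n else 0) + lam n) = t := by
      funext n
      simp only [hts]
      split <;> ring
    rw [heq] at h3
    have hval : (∑ n ∈ Finset.range d, (c n - 2 * lam n)) + 1 = 2 * T := by
      rw [Finset.sum_sub_distrib, hcsum, ← Finset.mul_sum]
      have : ∑ n ∈ Finset.range d, lam n = r 0 := by
        simp [hr]
      rw [this]; linarith
    rwa [hval] at h3
  have hB := hA.add htHS
  -- pointwise bound
  have hbd : ∀ n, |productCoarseGraining lam d n - lam n| ≤ c (n % d) * s (n / d) + t n := by
    intro n
    rw [hmu]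
    by_cases hn : n < d
    · have h0 : n / d = 0 := Nat.div_eq_of_lt hn
      have hm : n % d = n := Nat.mod_eq_of_lt hn
      rw [h0, hm, hs, hts]
      simp only [if_pos rfl, if_pos hn]
      have : c n * r 0 - lam n = -(c n * (1 - r 0)) + (c n - lam n) := by ring
      rw [this]
      calc |(-(c n * (1 - r 0)) + (c n - lam n))| ≤ |(-(c n * (1 - r 0)))| + |c n - lam n| :=
            abs_add_le _ _
        _ = c n * (1 - r 0) + (c n - lam n) := by
            rw [abs_neg, abs_of_nonneg (mul_nonneg (hcnn n) (by linarith)),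
              abs_of_nonneg (by have := hlamc n; rw [hm] at this; linarith)]
    · have h0 : n / d ≠ 0 := by
        intro h
        exact hn ((Nat.div_eq_zero_iff.mp h).resolve_left (by omega))
      rw [hs, hts]
      simp only [if_neg h0, if_neg hn]
      calc |c (n % d) * r (n / d) - lam n| ≤ |c (n % d) * r (n / d)| + |lam n| := abs_sub _ _
        _ = c (n % d) * r (n / d) + lam n := by
            rw [abs_of_nonneg (mul_nonneg (hcnn _) (hrnn _)), abs_of_nonneg (hnn n)]
  have hBs : Summable (fun n => c (n % d) * s (n / d) + t n) := hB.summable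
  have hsummable : Summable (fun n => |productCoarseGraining lam d n - lam n|) :=
    Summable.of_nonneg_of_le (fun n => abs_nonneg _) hbd hBs
  refine ⟨hsummable, ?_⟩
  calc ∑' n, |productCoarseGraining lam d n - lam n| ≤ ∑' n, (c (n % d) * s (n / d) + t n) :=
        Summable.tsum_le_tsum hbd hsummable hBs
    _ = 2 * T + 2 * T := hB.tsum_eq
    _ = 4 * T := by ring
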